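/- arXiv:1304.6039 — 4 statements merged into one kernel-verified Lean document; each statement's English description precedes it below -/
import Mathlib

section
/- Let T be a D×D matrix over a field K with minimal polynomial of degree D, r and u vectors in K^D such that the sequence S_j = u^t T^j r has minimal polynomial of degree exactly D. Then the D×D Hankel matrix H with entries H_{ij} = S_{i+j} (0 ≤ i,j ≤ D-1) is invertible. -/
open Matrix

/-- Let `T` be a `D×D` matrix whose minimal polynomial has degree `D`,
and `u, r` vectors such that the linearly recurrent sequence `S j = uᵗ T^j r` has
minimal polynomial of degree exactly `D` (i.e. no nonzero polynomial of degree `< D`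
annihilates `S`).  Then the Hankel matrix `H = (S_{i+j})_{0 ≤ i,j ≤ D-1}` is
invertible. -/
theorem hankel_matrix_invertible
    (K : Type*) [Field K] (D : ℕ)
    (T : Matrix (Fin D) (Fin D) K) (r u : Fin D → K)
    (hT : (minpoly K T).natDegree = D)
    (S : ℕ → K) (hS : ∀ j, S j = u ⬝ᵥ ((T ^ j) *ᵥ r))
    -- the minimal polynomial of the sequence `S` has degree exactly `D`:
    -- no nonzero annihilating polynomial has degree `< D`
    (hmin : ∀ p : Polynomial K, p ≠ 0 →
      (∀ j : ℕ, ∑ k ∈ Finset.range (p.natDegree + 1), p.coeff k * S (j + k) = 0) →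
      D ≤ p.natDegree) :
    IsUnit (Matrix.of (fun i j : Fin D => S ((i : ℕ) + (j : ℕ)))) := by
  rcases Nat.eq_zero_or_pos D with hD | hD
  · subst hD
    have h0 : (Matrix.of fun i j : Fin 0 => S ((i : ℕ) + (j : ℕ))) = 1 := by
      funext i
      exact i.elim0
    rw [h0]
    exact isUnit_one
  by_contra hH
  have hdet : (Matrix.of (fun i j : Fin D => S ((i : ℕ) + (j : ℕ)))).det = 0 := by
    by_contra h
    exact hH ((Matrix.isUnit_iff_isUnit_det _).mpr (isUnit_iff_ne_zero.mpr h))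
  obtain ⟨c, hc0, hc⟩ := (Matrix.exists_mulVec_eq_zero_iff).mpr hdet
  set m := minpoly K T with hm
  have hint : IsIntegral K T := IsIntegral.of_finite K T
  have haev : Polynomial.aeval T m = 0 := minpoly.aeval K T
  have hmon : m.coeff D = 1 := by
    have := (minpoly.monic hint).coeff_natDegree
    rwa [hT] at this
  -- the order-D recurrence satisfied by S
  have hrec : ∀ n, ∑ k ∈ Finset.range (D + 1), m.coeff k * S (n + k) = 0 := by
    intro n
    have h1 : ∑ k ∈ Finset.range (D + 1), m.coeff k • (T ^ k) = 0 := by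
      have h := Polynomial.aeval_eq_sum_range (x := T) (p := m)
      rw [haev, hT] at h
      exact h.symm
    have h2 : ∑ k ∈ Finset.range (D + 1), m.coeff k • (T ^ (n + k)) = 0 := by
      calc ∑ k ∈ Finset.range (D + 1), m.coeff k • (T ^ (n + k))
          = T ^ n * ∑ k ∈ Finset.range (D + 1), m.coeff k • (T ^ k) := by
            rw [Finset.mul_sum]
            refine Finset.sum_congr rfl fun k _ => ?_
            rw [pow_add, Matrix.mul_smul]
        _ = 0 := by rw [h1, mul_zero]
    calc ∑ k ∈ Finset.range (D + 1), m.coeff k * S (n + k)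
        = ∑ k ∈ Finset.range (D + 1), u ⬝ᵥ ((m.coeff k • (T ^ (n + k))) *ᵥ r) := by
          refine Finset.sum_congr rfl fun k _ => ?_
          rw [hS, Matrix.smul_mulVec, dotProduct_smul, smul_eq_mul]
      _ = u ⬝ᵥ ((∑ k ∈ Finset.range (D + 1), m.coeff k • (T ^ (n + k))) *ᵥ r) := by
          simp only [Matrix.mulVec, dotProduct, Matrix.sum_apply, Finset.sum_mul,
            Finset.mul_sum]
          rw [Finset.sum_comm]
          refine Finset.sum_congr rfl fun i _ => ?_
          rw [Finset.sum_comm]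
      _ = 0 := by rw [h2, Matrix.zero_mulVec, dotProduct_zero]
  have hSrec : ∀ n, S (n + D) = -∑ i ∈ Finset.range D, m.coeff i * S (n + i) := by
    intro n
    have h := hrec n
    rw [Finset.sum_range_succ, hmon, one_mul] at h
    exact eq_neg_of_add_eq_zero_right h
  -- the coefficient sequence coming from the kernel vector
  set c' : ℕ → K := fun k => if h : k < D then c ⟨k, h⟩ else 0 with hc'
  have hsum : ∀ j, ∑ k ∈ Finset.range D, c' k * S (j + k)
      = ∑ i : Fin D, c i * S (j + (i : ℕ)) := by
    intro j
    rw [← Fin.sum_univ_eq_sum_range (fun k => c' k * S (j + k)) D]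
    refine Finset.sum_congr rfl fun i _ => ?_
    simp [hc', i.isLt]
  -- the extended annihilation of S by c'
  have hg : ∀ j, ∑ k ∈ Finset.range D, c' k * S (j + k) = 0 := by
    intro j
    induction j using Nat.strong_induction_on with
    | _ j ih =>
      rcases lt_or_ge j D with hj | hj
      · have h0 := congrFun hc ⟨j, hj⟩
        simp only [Matrix.mulVec, dotProduct, Matrix.of_apply, Pi.zero_apply] at h0
        rw [hsum]
        rw [← h0]
        exact Finset.sum_congr rfl fun i _ => by ring
      · calc ∑ k ∈ Finset.range D, c' k * S (j + k)
            = ∑ k ∈ Finset.range D,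
                c' k * -∑ i ∈ Finset.range D, m.coeff i * S (j - D + k + i) := by
              refine Finset.sum_congr rfl fun k _ => ?_
              rw [show j + k = (j - D + k) + D by omega, hSrec]
          _ = ∑ i ∈ Finset.range D, ∑ k ∈ Finset.range D,
                -(m.coeff i * (c' k * S (j - D + i + k))) := by
              rw [Finset.sum_comm]
              refine Finset.sum_congr rfl fun k _ => ?_
              rw [mul_neg, Finset.mul_sum, ← Finset.sum_neg_distrib]
              refine Finset.sum_congr rfl fun i _ => ?_
              rw [show j - D + k + i = j - D + i + k by omega]
              ring
          _ = 0 := by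
              refine Finset.sum_eq_zero fun i hi => ?_
              have hiD := Finset.mem_range.mp hi
              have : ∑ k ∈ Finset.range D, c' k * S ((j - D + i) + k) = 0 :=
                ih (j - D + i) (by omega)
              rw [Finset.sum_neg_distrib, ← Finset.mul_sum, this, mul_zero, neg_zero]
  -- build the annihilating polynomial
  set p : Polynomial K := ∑ i : Fin D, Polynomial.monomial (i : ℕ) (c i) with hp
  have hpc : ∀ k, p.coeff k = c' k := by
    intro k
    rw [hp, Polynomial.finset_sum_coeff]
    simp only [Polynomial.coeff_monomial]
    rcases lt_or_ge k D with hk | hk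
    · rw [Finset.sum_eq_single (⟨k, hk⟩ : Fin D)]
      · simp [hc', hk]
      · intro i _ hne
        rw [if_neg]
        intro h
        exact hne (Fin.ext h)
      · intro h
        exact absurd (Finset.mem_univ _) h
    · rw [Finset.sum_eq_zero, hc']
      · simp [Nat.not_lt.mpr hk]
      · intro i _
        rw [if_neg]
        omega
  have hp0 : p ≠ 0 := by
    obtain ⟨i, hi⟩ := Function.ne_iff.mp hc0
    intro h
    apply hi
    have := hpc (i : ℕ)
    rw [h, Polynomial.coeff_zero] at this
    simp only [hc', i.isLt, dif_pos, Fin.eta] at this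
    exact this.symm
  have hdeg : p.natDegree < D := by
    rw [Polynomial.natDegree_lt_iff_degree_lt hp0]
    rw [Polynomial.degree_lt_iff_coeff_zero]
    intro n hn
    rw [hpc]
    show (if h : n < D then c ⟨n, h⟩ else 0) = 0
    rw [dif_neg (by omega : ¬ n < D)]
  have hann : ∀ j : ℕ, ∑ k ∈ Finset.range (p.natDegree + 1), p.coeff k * S (j + k) = 0 := by
    intro j
    have hsub : Finset.range (p.natDegree + 1) ⊆ Finset.range D :=
      Finset.range_subset_range.mpr (by omega)
    rw [Finset.sum_subset hsub]
    · calc ∑ k ∈ Finset.range D, p.coeff k * S (j + k)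
          = ∑ k ∈ Finset.range D, c' k * S (j + k) :=
            Finset.sum_congr rfl fun k _ => by rw [hpc]
        _ = 0 := hg j
    · intro k _ hk
      rw [Polynomial.coeff_eq_zero_of_natDegree_lt (by
        simp only [Finset.mem_range, not_lt] at hk; omega), zero_mul]
  have := hmin p hp0 hann
  omega
end

section
/- Let I = ⟨f_1,...,f_s⟩ be an ideal of K[x_1,...,x_n] generated by affine polynomials whose homogeneous components of highest degree (f_1^h,...,f_s^h) form a regular sequence. Then the initial ideal of I with respect to the DRL order equals the initial ideal of the homogeneous ideal I^h = ⟨f_1^h,...,f_s^h⟩: in_{DRL}(I) = in_{DRL}(I^h). -/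
open MvPolynomial

/-- Regular sequence: each `f i` is not a zero divisor modulo the previous ones. -/
def IsRegularSeq {K : Type*} [Field K] {n s : ℕ}
    (f : Fin s → MvPolynomial (Fin n) K) : Prop :=
  ∀ i : Fin s, ∀ p : MvPolynomial (Fin n) K,
    p * f i ∈ Ideal.span ((fun j : Fin s => f j) '' {j | j < i}) →
    p ∈ Ideal.span ((fun j : Fin s => f j) '' {j | j < i})

/-- The set of leading monomials (w.r.t. the linear order `lo` on exponent vectors)
of nonzero elements of an ideal `J`; the monomials of the initial ideal `in(J)`. -/
def inMon {K : Type*} [Field K] {n : ℕ} (lo : LinearOrder (Fin n →₀ ℕ))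
    (J : Ideal (MvPolynomial (Fin n) K)) : Set (Fin n →₀ ℕ) :=
  {m | ∃ p ∈ J, p ≠ 0 ∧ m ∈ p.support ∧ ∀ m' ∈ p.support, lo.le m' m}

section Aux

variable {K : Type*} [Field K] {n : ℕ}

lemma degree_sum_eq (m : Fin n →₀ ℕ) : (m.sum fun _ e => e) = m.degree := rfl

lemma degree_add' (u v : Fin n →₀ ℕ) : (u + v).degree = u.degree + v.degree := by
  simp [Finsupp.degree_eq_weight_one, map_add]

lemma degree_le_totalDegree {p : MvPolynomial (Fin n) K} {m : Fin n →₀ ℕ}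
    (h : m ∈ p.support) : m.degree ≤ p.totalDegree := by
  rw [← degree_sum_eq]; exact le_totalDegree h

lemma exists_degree_eq_totalDegree {p : MvPolynomial (Fin n) K} (hp : p ≠ 0) :
    ∃ m ∈ p.support, m.degree = p.totalDegree := by
  obtain ⟨m, hm, hm2⟩ := Finset.exists_mem_eq_sup p.support
    (support_nonempty.mpr hp) (fun m => m.sum fun _ e => e)
  exact ⟨m, hm, hm2.symm⟩

lemma comp_of_isHomogeneous {φ : MvPolynomial (Fin n) K} {k : ℕ} (e : ℕ)
    (h : φ.IsHomogeneous k) :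
    homogeneousComponent e φ = if e = k then φ else 0 :=
  homogeneousComponent_of_mem h

lemma mem_support_comp {p : MvPolynomial (Fin n) K} {e : ℕ} {m : Fin n →₀ ℕ} :
    m ∈ (homogeneousComponent e p).support ↔ m.degree = e ∧ m ∈ p.support := by
  simp only [mem_support_iff, coeff_homogeneousComponent]
  by_cases h : m.degree = e <;> simp [h]

lemma totalDegree_add_le_of_support {g : MvPolynomial (Fin n) K} {dd D : ℕ}
    (hg : g ≠ 0) (h : ∀ m ∈ g.support, m.degree + dd ≤ D) : g.totalDegree + dd ≤ D := by
  obtain ⟨m, hm, he⟩ := exists_degree_eq_totalDegree hg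
  have := h m hm; omega




/-- Component of a product with a homogeneous right factor. -/
lemma comp_mul_hom {b F : MvPolynomial (Fin n) K} {dF : ℕ} (hF : F.IsHomogeneous dF) (e : ℕ) :
    homogeneousComponent e (b * F)
      = (if dF ≤ e then homogeneousComponent (e - dF) b else 0) * F := by
  conv_lhs => rw [← sum_homogeneousComponent b]
  rw [Finset.sum_mul, map_sum]
  rw [Finset.sum_congr rfl (fun a _ =>
    comp_of_isHomogeneous e ((homogeneousComponent_isHomogeneous a b).mul hF))]
  by_cases hle : dF ≤ e
  · rw [if_pos hle]
    rw [Finset.sum_congr rfl (fun a (_ : a ∈ Finset.range (b.totalDegree + 1)) =>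
      (by by_cases h : a = e - dF
          · rw [if_pos (by omega : e = a + dF), if_pos h]
          · rw [if_neg (fun hc => h (by omega)), if_neg h] :
        (if e = a + dF then homogeneousComponent a b * F else 0)
          = (if a = e - dF then homogeneousComponent a b * F else 0)))]
    rw [Finset.sum_ite_eq' (Finset.range (b.totalDegree + 1)) (e - dF)
      (fun a => homogeneousComponent a b * F)]
    by_cases hmem : e - dF ∈ Finset.range (b.totalDegree + 1)
    · rw [if_pos hmem]
    · rw [if_neg hmem, homogeneousComponent_eq_zero, zero_mul]
      rw [Finset.mem_range] at hmem; omega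
  · rw [if_neg hle, zero_mul]
    apply Finset.sum_eq_zero; intro a _
    rw [if_neg (by omega)]

/-- Top component of a product. -/
lemma comp_top_mul (g fp : MvPolynomial (Fin n) K) {D : ℕ}
    (h : g.totalDegree + fp.totalDegree ≤ D) :
    homogeneousComponent D (g * fp)
      = homogeneousComponent (D - fp.totalDegree) g
          * homogeneousComponent fp.totalDegree fp := by
  conv_lhs => rw [← sum_homogeneousComponent fp]
  rw [Finset.mul_sum, map_sum]
  rw [Finset.sum_eq_single_of_mem fp.totalDegree (Finset.self_mem_range_succ _)]
  · rw [comp_mul_hom (homogeneousComponent_isHomogeneous fp.totalDegree fp) D,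
      if_pos (by omega)]
  · intro b hb hbne
    rw [Finset.mem_range] at hb
    rw [comp_mul_hom (homogeneousComponent_isHomogeneous b fp) D,
      if_pos (show b ≤ D by omega),
      homogeneousComponent_eq_zero (D - b) g (by omega), zero_mul]

/-- Everything below the top component has smaller degree. -/
lemma support_sub_top {p : MvPolynomial (Fin n) K} :
    ∀ m ∈ (p - homogeneousComponent p.totalDegree p).support, m.degree < p.totalDegree := by
  intro m hm
  rw [mem_support_iff, coeff_sub, coeff_homogeneousComponent] at hm
  by_contra hge; push_neg at hge
  rcases eq_or_lt_of_le hge with heq | hlt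
  · rw [if_pos heq.symm, sub_self] at hm; exact hm rfl
  · rw [if_neg (by omega), sub_zero] at hm
    exact hm (coeff_eq_zero_of_totalDegree_lt hlt)

lemma degree_lt_of_mem_support_mul {c q : MvPolynomial (Fin n) K} {a b : ℕ}
    (hc : c.IsHomogeneous a) (hq : ∀ m ∈ q.support, m.degree < b) :
    ∀ m ∈ (c * q).support, m.degree < a + b := by
  intro m hm
  classical
  rw [mem_support_iff, coeff_mul] at hm
  by_contra hge; push_neg at hge
  apply hm
  apply Finset.sum_eq_zero; intro x hx
  rw [Finset.HasAntidiagonal.mem_antidiagonal] at hx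
  by_cases h1 : coeff x.1 c = 0
  · rw [h1, zero_mul]
  · have hd1 : x.1.degree = a := by
      by_contra hne; exact h1 (hc.coeff_eq_zero hne)
    have h2 : coeff x.2 q = 0 := by
      rw [← notMem_support_iff]
      intro hmem
      have := hq x.2 hmem
      have hadd : (x.1 + x.2).degree = x.1.degree + x.2.degree := by
        simp [Finsupp.degree_eq_weight_one, map_add]
      rw [hx] at hadd; omega
    rw [h2, mul_zero]

lemma degree_lt_of_mem_support_sum {ι : Type*} {t : Finset ι}
    {u : ι → MvPolynomial (Fin n) K} {b : ℕ}
    (h : ∀ i ∈ t, ∀ m ∈ (u i).support, m.degree < b) :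
    ∀ m ∈ (∑ i ∈ t, u i).support, m.degree < b := by
  intro m hm
  by_contra hge; push_neg at hge
  rw [mem_support_iff, coeff_sum] at hm
  apply hm
  apply Finset.sum_eq_zero; intro i hi
  rw [← notMem_support_iff]
  intro hmem
  have := h i hi m hmem; omega




lemma koszul_syzygy {s : ℕ} (F : Fin s → MvPolynomial (Fin n) K) (d : Fin s → ℕ)
    (hFh : ∀ i, (F i).IsHomogeneous (d i))
    (hreg : ∀ (i : Fin s) (p : MvPolynomial (Fin n) K),
      p * F i ∈ Ideal.span ((fun j : Fin s => F j) '' {j | j < i}) →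
      p ∈ Ideal.span ((fun j : Fin s => F j) '' {j | j < i})) :
    ∀ (k : ℕ), k ≤ s → ∀ (D : ℕ) (a : Fin s → MvPolynomial (Fin n) K),
      (∀ i, (a i).IsHomogeneous (D - d i)) → (∀ i, a i ≠ 0 → d i ≤ D) →
      (∀ i : Fin s, ¬ (i : ℕ) < k → a i = 0) →
      (∑ i, a i * F i) = 0 →
      ∃ c : Fin s → Fin s → MvPolynomial (Fin n) K,
        (∀ i j, c j i = - c i j) ∧ (∀ i, c i i = 0) ∧
        (∀ i j, (c i j).IsHomogeneous (D - d i - d j)) ∧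
        (∀ i j, c i j ≠ 0 → d i + d j ≤ D) ∧
        (∀ i j : Fin s, ¬ ((i : ℕ) < k ∧ (j : ℕ) < k) → c i j = 0) ∧
        (∀ i, a i = ∑ j, c i j * F j) := by
  intro k
  induction k with
  | zero =>
    intro _ D a _ _ hsupp _
    exact ⟨fun _ _ => 0, by simp, by simp, fun i j => isHomogeneous_zero _ _ _,
      by simp, by simp, fun i => by simp [hsupp i (by omega)]⟩
  | succ k IH =>
    intro hk D a hahom hane hasupp hker
    have hks : k < s := hk
    set Kk : Fin s := ⟨k, hks⟩ with hKk
    have hKv : (Kk : ℕ) = k := rfl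
    have hKnl : ¬ (Kk : ℕ) < k := by omega
    by_cases hA : a Kk = 0
    · obtain ⟨c, h1, h2, h3, h4, h5, h6⟩ := IH (by omega) D a hahom hane
        (fun i hi => by
          by_cases hik : (i : ℕ) = k
          · have hiK : i = Kk := Fin.ext hik
            rwa [hiK]
          · exact hasupp i (by omega)) hker
      exact ⟨c, h1, h2, h3, h4, fun i j hij => h5 i j (by omega), h6⟩
    · have hdK : d Kk ≤ D := hane Kk hA
      have hmem : a Kk * F Kk ∈ Ideal.span ((fun j : Fin s => F j) '' {j | j < Kk}) := by
        have h0 : a Kk * F Kk + ∑ i ∈ Finset.univ.erase Kk, a i * F i = 0 := by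
          rw [Finset.add_sum_erase Finset.univ (fun i => a i * F i) (Finset.mem_univ Kk)]
          exact hker
        rw [eq_neg_of_add_eq_zero_left h0]
        apply neg_mem
        apply Ideal.sum_mem
        intro i hi
        rcases Finset.mem_erase.mp hi with ⟨hiK, -⟩
        by_cases hik : (i : ℕ) < k
        · exact Ideal.mul_mem_left _ _ (Ideal.subset_span
            ⟨i, Fin.lt_def.mpr hik, rfl⟩)
        · have hia : a i = 0 := hasupp i (by
            have : (i : ℕ) ≠ k := fun h => hiK (Fin.ext h)
            omega)
          rw [hia, zero_mul]
          exact Ideal.zero_mem _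
      have hmem2 := hreg Kk _ hmem
      haveI : Fintype ↥{j : Fin s | j < Kk} := (Set.toFinite _).fintype
      rw [Set.image_eq_range, Ideal.mem_span_range_iff_exists_fun] at hmem2
      obtain ⟨b', hb'⟩ := hmem2
      set b : Fin s → MvPolynomial (Fin n) K :=
        fun j => if h : j < Kk then b' ⟨j, h⟩ else 0 with hbdef
      have hb : ∑ j, b j * F j = a Kk := by
        rw [← hb']
        have h1 : ∑ j ∈ Finset.univ.filter (fun j => j < Kk), b j * F j
            = ∑ j : Fin s, b j * F j := by
          apply Finset.sum_filter_of_ne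
          intro x _ hx
          by_contra hcon
          apply hx
          rw [hbdef]; dsimp only
          rw [dif_neg hcon, zero_mul]
        rw [← h1]
        rw [Finset.sum_subtype (Finset.univ.filter (fun j => j < Kk))
          (p := fun j => j ∈ {j : Fin s | j < Kk}) (by simp [Set.mem_setOf_eq])
          (fun j => b j * F j)]
        apply Finset.sum_congr rfl
        intro x _
        congr 1
        rw [hbdef]; dsimp only
        rw [dif_pos (show (↑x : Fin s) < Kk from x.2)]
      set e := D - d Kk with he
      set b₀ : Fin s → MvPolynomial (Fin n) K :=
        fun j => if d j ≤ e then homogeneousComponent (e - d j) (b j) else 0 with hb₀def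
      have hb₀sum : ∑ j, b₀ j * F j = a Kk := by
        have hc := congrArg (homogeneousComponent e) hb
        rw [map_sum] at hc
        calc ∑ j, b₀ j * F j
            = ∑ j, homogeneousComponent e (b j * F j) := by
              apply Finset.sum_congr rfl; intro j _
              rw [comp_mul_hom (hFh j) e]
          _ = homogeneousComponent e (a Kk) := hc
          _ = a Kk := by
              rw [comp_of_isHomogeneous e (hahom Kk), if_pos he]
      have hb₀hom : ∀ j, (b₀ j).IsHomogeneous (e - d j) := by
        intro j
        rw [hb₀def]; dsimp only
        split
        · exact homogeneousComponent_isHomogeneous _ _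
        · exact isHomogeneous_zero _ _ _
      have hb₀ne : ∀ j, b₀ j ≠ 0 → d j ≤ e := by
        intro j hj
        by_contra hcon
        apply hj
        rw [hb₀def]; dsimp only
        rw [if_neg hcon]
      have hb₀supp : ∀ j : Fin s, ¬ (j : ℕ) < k → b₀ j = 0 := by
        intro j hj
        have hbj : b j = 0 := by
          rw [hbdef]; dsimp only
          rw [dif_neg (show ¬ j < Kk from fun hcon => hj hcon)]
        rw [hb₀def]; dsimp only
        rw [hbj, map_zero, ite_self]
      set a' : Fin s → MvPolynomial (Fin n) K :=
        fun i => (if (i : ℕ) < k then a i else 0) + b₀ i * F Kk with ha'def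
      have ha'sum : ∑ i, a' i * F i = 0 := by
        have step : ∀ i : Fin s, a' i * F i
            = (a i * F i - (if i = Kk then a Kk * F Kk else 0)) + (b₀ i * F i) * F Kk := by
          intro i
          rw [ha'def]; dsimp only
          by_cases hik : (i : ℕ) < k
          · rw [if_pos hik, if_neg (fun hcon => by rw [hcon, hKv] at hik; omega)]
            ring
          · by_cases hiK : i = Kk
            · rw [if_neg hik, if_pos hiK, hiK]
              ring
            · rw [if_neg hik, if_neg hiK,
                hasupp i (fun hcon => hiK (Fin.ext (by omega)))]
              ring
        rw [Finset.sum_congr rfl (fun i _ => step i)]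
        rw [Finset.sum_add_distrib, Finset.sum_sub_distrib, hker,
          Finset.sum_ite_eq' Finset.univ Kk (fun _ => a Kk * F Kk),
          if_pos (Finset.mem_univ _), ← Finset.sum_mul, hb₀sum]
        ring
      have ha'hom : ∀ i, (a' i).IsHomogeneous (D - d i) := by
        intro i
        rw [ha'def]; dsimp only
        apply IsHomogeneous.add
        · split
          · exact hahom i
          · exact isHomogeneous_zero _ _ _
        · by_cases hde : d i ≤ e
          · have h2 := (hb₀hom i).mul (hFh Kk)
            rwa [show e - d i + d Kk = D - d i by omega] at h2
          · rw [show b₀ i = 0 by rw [hb₀def]; dsimp only; rw [if_neg hde], zero_mul]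
            exact isHomogeneous_zero _ _ _
      have ha'ne : ∀ i, a' i ≠ 0 → d i ≤ D := by
        intro i hi
        by_contra hcon
        apply hi
        rw [ha'def]; dsimp only
        rw [show b₀ i = 0 by rw [hb₀def]; dsimp only; rw [if_neg (by omega)], zero_mul,
          add_zero]
        split
        · exact by_contra fun h => hcon (hane i (by simpa using h))
        · rfl
      have ha'supp : ∀ i : Fin s, ¬ (i : ℕ) < k → a' i = 0 := by
        intro i hi
        rw [ha'def]; dsimp only
        rw [if_neg hi, hb₀supp i hi, zero_mul, add_zero]
      obtain ⟨c', hc'anti, hc'diag, hc'hom, hc'bd, hc'supp, hc'row⟩ :=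
        IH (by omega) D a' ha'hom ha'ne ha'supp ha'sum
      set c : Fin s → Fin s → MvPolynomial (Fin n) K := fun i j =>
        if (i : ℕ) < k ∧ (j : ℕ) < k then c' i j
        else if (i : ℕ) < k ∧ (j : ℕ) = k then - b₀ i
        else if (i : ℕ) = k ∧ (j : ℕ) < k then b₀ j
        else 0 with hcdef
      have hc1 : ∀ i j : Fin s, (i : ℕ) < k → (j : ℕ) < k → c i j = c' i j := by
        intro i j hi hj
        rw [hcdef]; dsimp only
        split_ifs with h1 h2 h3 <;> first | rfl | (exfalso; omega)
      have hc2 : ∀ i j : Fin s, (i : ℕ) < k → (j : ℕ) = k → c i j = - b₀ i := by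
        intro i j hi hj
        rw [hcdef]; dsimp only
        split_ifs with h1 h2 h3 <;> first | rfl | (exfalso; omega)
      have hc3 : ∀ i j : Fin s, (i : ℕ) = k → (j : ℕ) < k → c i j = b₀ j := by
        intro i j hi hj
        rw [hcdef]; dsimp only
        split_ifs with h1 h2 h3 <;> first | rfl | (exfalso; omega)
      have hc4 : ∀ i j : Fin s, ¬ ((i : ℕ) < k ∧ (j : ℕ) < k) →
          ¬ ((i : ℕ) < k ∧ (j : ℕ) = k) → ¬ ((i : ℕ) = k ∧ (j : ℕ) < k) → c i j = 0 := by
        intro i j h1' h2' h3'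
        rw [hcdef]; dsimp only
        split_ifs with h1 h2 h3 <;> first | rfl | (exfalso; omega)
      refine ⟨c, ?_, ?_, ?_, ?_, ?_, ?_⟩
      · -- antisymmetry
        intro i j
        by_cases hi1 : (i : ℕ) < k <;> by_cases hj1 : (j : ℕ) < k
        · rw [hc1 j i hj1 hi1, hc1 i j hi1 hj1]
          exact hc'anti i j
        · by_cases hj2 : (j : ℕ) = k
          · rw [hc3 j i hj2 hi1, hc2 i j hi1 hj2, neg_neg]
          · rw [hc4 j i (by omega) (by omega) (by omega),
              hc4 i j (by omega) (by omega) (by omega), neg_zero]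
        · by_cases hi2 : (i : ℕ) = k
          · rw [hc2 j i hj1 hi2, hc3 i j hi2 hj1]
          · rw [hc4 j i (by omega) (by omega) (by omega),
              hc4 i j (by omega) (by omega) (by omega), neg_zero]
        · rw [hc4 j i (by omega) (by omega) (by omega),
            hc4 i j (by omega) (by omega) (by omega), neg_zero]
      · -- zero diagonal
        intro i
        by_cases hi1 : (i : ℕ) < k
        · rw [hc1 i i hi1 hi1]
          exact hc'diag i
        · rw [hc4 i i (by omega) (by omega) (by omega)]
      · -- homogeneity
        intro i j
        by_cases hi1 : (i : ℕ) < k <;> by_cases hj1 : (j : ℕ) < k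
        · rw [hc1 i j hi1 hj1]
          exact hc'hom i j
        · by_cases hj2 : (j : ℕ) = k
          · have hjK : j = Kk := Fin.ext hj2
            subst hjK
            rw [hc2 i Kk hi1 hKv]
            have h2 := (hb₀hom i).neg
            rwa [show e - d i = D - d i - d Kk by omega] at h2
          · rw [hc4 i j (by omega) (by omega) (by omega)]
            exact isHomogeneous_zero _ _ _
        · by_cases hi2 : (i : ℕ) = k
          · have hiK : i = Kk := Fin.ext hi2
            subst hiK
            rw [hc3 Kk j hKv hj1]
            have h2 := hb₀hom j
            rwa [show e - d j = D - d Kk - d j by omega] at h2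
          · rw [hc4 i j (by omega) (by omega) (by omega)]
            exact isHomogeneous_zero _ _ _
        · rw [hc4 i j (by omega) (by omega) (by omega)]
          exact isHomogeneous_zero _ _ _
      · -- degree bound
        intro i j hne
        by_cases hi1 : (i : ℕ) < k <;> by_cases hj1 : (j : ℕ) < k
        · rw [hc1 i j hi1 hj1] at hne
          exact hc'bd i j hne
        · by_cases hj2 : (j : ℕ) = k
          · have hjK : j = Kk := Fin.ext hj2
            subst hjK
            rw [hc2 i Kk hi1 hKv] at hne
            have := hb₀ne i (fun h => hne (by rw [h, neg_zero]))
            omega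
          · rw [hc4 i j (by omega) (by omega) (by omega)] at hne
            exact absurd rfl hne
        · by_cases hi2 : (i : ℕ) = k
          · have hiK : i = Kk := Fin.ext hi2
            subst hiK
            rw [hc3 Kk j hKv hj1] at hne
            have := hb₀ne j hne
            omega
          · rw [hc4 i j (by omega) (by omega) (by omega)] at hne
            exact absurd rfl hne
        · rw [hc4 i j (by omega) (by omega) (by omega)] at hne
          exact absurd rfl hne
      · -- support
        intro i j hij
        exact hc4 i j (by omega) (by omega) (by omega)
      · -- rows
        intro i
        by_cases hi1 : (i : ℕ) < k
        · have hstep : ∀ j, c i j * F j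
              = c' i j * F j + (if j = Kk then (- b₀ i) * F Kk else 0) := by
            intro j
            by_cases hj1 : (j : ℕ) < k
            · rw [hc1 i j hi1 hj1,
                if_neg (show ¬ j = Kk from fun h => by subst h; exact hKnl hj1), add_zero]
            · by_cases hj2 : (j : ℕ) = k
              · have hjK : j = Kk := Fin.ext hj2
                subst hjK
                rw [hc2 i Kk hi1 hKv, if_pos rfl, hc'supp i Kk (by omega), zero_mul,
                  zero_add]
              · rw [hc4 i j (by omega) (by omega) (by omega),
                  hc'supp i j (by omega), zero_mul,
                  if_neg (show ¬ j = Kk from fun h => by subst h; exact hj2 hKv), add_zero]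
          rw [Finset.sum_congr rfl (fun j _ => hstep j), Finset.sum_add_distrib,
            ← hc'row i, Finset.sum_ite_eq' Finset.univ Kk (fun _ => (- b₀ i) * F Kk),
            if_pos (Finset.mem_univ _), ha'def]
          dsimp only
          rw [if_pos hi1]
          ring
        · by_cases hi2 : (i : ℕ) = k
          · have hiK : i = Kk := Fin.ext hi2
            subst hiK
            have hstep : ∀ j, c Kk j * F j = b₀ j * F j := by
              intro j
              by_cases hj1 : (j : ℕ) < k
              · rw [hc3 Kk j hKv hj1]
              · rw [hc4 Kk j (by omega) (by omega) (by omega), hb₀supp j hj1, zero_mul]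
            rw [Finset.sum_congr rfl (fun j _ => hstep j), hb₀sum]
          · have hai : a i = 0 := hasupp i (by omega)
            rw [hai]
            symm
            apply Finset.sum_eq_zero
            intro j _
            rw [hc4 i j (by omega) (by omega) (by omega), zero_mul]

lemma key_reduction {s : ℕ} (f F : Fin s → MvPolynomial (Fin n) K) (d : Fin s → ℕ)
    (hd : ∀ i, (f i).totalDegree = d i)
    (hF : ∀ i, F i = homogeneousComponent (d i) (f i))
    (hreg : ∀ (i : Fin s) (p : MvPolynomial (Fin n) K),
      p * F i ∈ Ideal.span ((fun j : Fin s => F j) '' {j | j < i}) →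
      p ∈ Ideal.span ((fun j : Fin s => F j) '' {j | j < i})) :
    ∀ (D : ℕ) (g : Fin s → MvPolynomial (Fin n) K),
      (∀ i, ∀ m ∈ (g i).support, m.degree + d i ≤ D) →
      homogeneousComponent (∑ i, g i * f i).totalDegree (∑ i, g i * f i)
        ∈ Ideal.span (Set.range F) := by
  have hFhom : ∀ i, (F i).IsHomogeneous (d i) := fun i => by
    rw [hF i]; exact homogeneousComponent_isHomogeneous _ _
  have hsubtop : ∀ i, ∀ m ∈ (f i - F i).support, m.degree < d i := fun i => by
    have h := support_sub_top (p := f i)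
    rw [hd i] at h
    rw [hF i]
    exact h
  intro D
  induction D using Nat.strong_induction_on with
  | _ D IH =>
    intro g hg
    have hgb : ∀ i, g i ≠ 0 → (g i).totalDegree + d i ≤ D := fun i hi =>
      totalDegree_add_le_of_support hi (hg i)
    have hgfb : ∀ i, (g i * f i).totalDegree ≤ D := by
      intro i
      by_cases hi : g i = 0
      · simp [hi]
      · calc (g i * f i).totalDegree ≤ (g i).totalDegree + (f i).totalDegree :=
              totalDegree_mul _ _
          _ = (g i).totalDegree + d i := by rw [hd i]
          _ ≤ D := hgb i hi
    have hPD : (∑ i, g i * f i).totalDegree ≤ D :=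
      le_trans (totalDegree_finset_sum _ _) (Finset.sup_le fun i _ => hgfb i)
    have hcompD : homogeneousComponent D (∑ i, g i * f i)
        = ∑ i, homogeneousComponent (D - d i) (g i) * F i := by
      rw [map_sum]
      apply Finset.sum_congr rfl
      intro i _
      by_cases hi : g i = 0
      · simp [hi]
      · rw [comp_top_mul (g i) (f i) (by rw [hd i]; exact hgb i hi), hd i, ← hF i]
    by_cases hDeq : (∑ i, g i * f i).totalDegree = D
    · rw [hDeq, hcompD]
      apply Ideal.sum_mem
      intro i _
      exact Ideal.mul_mem_left _ _ (Ideal.subset_span (Set.mem_range_self i))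
    · have hDlt : (∑ i, g i * f i).totalDegree < D := lt_of_le_of_ne hPD hDeq
      have hker : ∑ i, homogeneousComponent (D - d i) (g i) * F i = 0 := by
        rw [← hcompD]
        exact homogeneousComponent_eq_zero D _ hDlt
      obtain ⟨c, hcanti, hcdiag, hchom, hcbd, -, hcrow⟩ :=
        koszul_syzygy F d hFhom hreg s (le_refl s) D
          (fun i => homogeneousComponent (D - d i) (g i))
          (fun i => homogeneousComponent_isHomogeneous _ _)
          (fun i hai => by
            have hgi : g i ≠ 0 := fun h => hai (by rw [h, map_zero])
            have := hgb i hgi; omega)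
          (fun i hi => absurd i.isLt hi) hker
      set g' : Fin s → MvPolynomial (Fin n) K := fun i =>
        g i - homogeneousComponent (D - d i) (g i) - ∑ j, c i j * (f j - F j) with hg'def
      have hsum : ∑ i, g' i * f i = ∑ i, g i * f i := by
        have step : ∀ i : Fin s, g' i * f i
            = (g i * f i - homogeneousComponent (D - d i) (g i) * f i)
              - (∑ j, (c i j * f j) * f i) + (∑ j, (c i j * F j) * f i) := by
          intro i
          rw [hg'def]; dsimp only
          rw [sub_mul, sub_mul, Finset.sum_mul]
          have hexp : ∑ j, (c i j * (f j - F j)) * f i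
              = ∑ j, ((c i j * f j) * f i - (c i j * F j) * f i) :=
            Finset.sum_congr rfl (fun j _ => by ring)
          rw [hexp, Finset.sum_sub_distrib]
          ring
        rw [Finset.sum_congr rfl (fun i _ => step i)]
        rw [Finset.sum_add_distrib, Finset.sum_sub_distrib, Finset.sum_sub_distrib]
        have hswap : ∑ i, ∑ j, (c i j * f j) * f i = 0 := by
          rw [← Finset.sum_product']
          apply Finset.sum_ninvolution (fun p => (p.2, p.1))
          · intro p
            rw [hcanti p.1 p.2]
            ring
          · intro p hp hpp
            apply hp
            have h12 : p.2 = p.1 := congrArg Prod.fst hpp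
            rw [h12, hcdiag, zero_mul, zero_mul]
          · intro p; exact Finset.mem_univ _
          · intro p; simp
        have hrows : ∑ i, ∑ j, (c i j * F j) * f i
            = ∑ i, homogeneousComponent (D - d i) (g i) * f i := by
          apply Finset.sum_congr rfl
          intro i _
          rw [← Finset.sum_mul, ← hcrow i]
        rw [hswap, hrows]
        ring
      have hg'b : ∀ i, ∀ m ∈ (g' i).support, m.degree + d i ≤ D - 1 := by
        intro i m hm
        rw [hg'def] at hm; dsimp only at hm
        rw [mem_support_iff, coeff_sub, coeff_sub] at hm
        by_cases hctr : coeff m (g i)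
            - coeff m (homogeneousComponent (D - d i) (g i)) = 0
        · rw [hctr, zero_sub, neg_ne_zero, coeff_sum] at hm
          obtain ⟨j, -, hj⟩ := Finset.exists_ne_zero_of_sum_ne_zero hm
          have hcij : c i j ≠ 0 := fun h => hj (by rw [h, zero_mul, coeff_zero])
          have hbd := hcbd i j hcij
          have hlt := degree_lt_of_mem_support_mul (hchom i j) (hsubtop j) m
            (mem_support_iff.mpr hj)
          omega
        · have hgi : g i ≠ 0 := by
            intro h
            apply hctr
            rw [h]; simp
          have hcg : coeff m (g i) ≠ 0 := by
            intro h0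
            apply hctr
            rw [h0, coeff_homogeneousComponent]
            split <;> simp [h0]
          have hdeg : m.degree + d i ≤ D := hg i m (mem_support_iff.mpr hcg)
          have hne' : m.degree ≠ D - d i := by
            intro heq
            apply hctr
            rw [coeff_homogeneousComponent, if_pos heq]
            exact sub_self _
          have := hgb i hgi
          omega
      have hres := IH (D - 1) (by omega) g' hg'b
      rwa [hsum] at hres

end Aux

/-- Let `I = ⟨f₁,…,f_s⟩` be generated by affine polynomials whose top
homogeneous components `(f₁ʰ,…,f_sʰ)` form a regular sequence.  Then, for the DRL order
(any degree-compatible monomial order), the initial ideal of `I` equals the initial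
ideal of `Iʰ = ⟨f₁ʰ,…,f_sʰ⟩`. -/

theorem initial_ideal_eq_initial_of_top_components
    (K : Type*) [Field K] (n s : ℕ)
    (lo : LinearOrder (Fin n →₀ ℕ))
    -- degree-compatible monomial order (e.g. DRL)
    (hdeg : ∀ m m' : Fin n →₀ ℕ,
      m.sum (fun _ e => e) < m'.sum (fun _ e => e) → lo.lt m m')
    (hmul : ∀ m m' d : Fin n →₀ ℕ, lo.le m m' → lo.le (m + d) (m' + d))
    (f : Fin s → MvPolynomial (Fin n) K) (hne : ∀ i, f i ≠ 0)
    (hreg : IsRegularSeq (fun i => homogeneousComponent (f i).totalDegree (f i))) :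
    inMon lo (Ideal.span (Set.range f)) =
      inMon lo (Ideal.span
        (Set.range (fun i => homogeneousComponent (f i).totalDegree (f i)))) := by
  ext m
  simp only [inMon, Set.mem_setOf_eq]
  constructor
  · rintro ⟨p, hp, hp0, hmem, hmax⟩
    obtain ⟨g, hgsum⟩ := Ideal.mem_span_range_iff_exists_fun.mp hp
    have hmd : m.degree = p.totalDegree := by
      apply le_antisymm (degree_le_totalDegree hmem)
      obtain ⟨m₀, hm₀, hm₀d⟩ := exists_degree_eq_totalDegree hp0
      by_contra hlt
      push_neg at hlt
      have hlo := hdeg m m₀ (show m.degree < m₀.degree by omega)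
      exact ((lo.lt_iff_le_not_ge m m₀).mp hlo).2 (hmax m₀ hm₀)
    set D := Finset.univ.sup (fun i => (g i).totalDegree + (f i).totalDegree) with hD
    have hgD : ∀ i, ∀ m' ∈ (g i).support, m'.degree + (f i).totalDegree ≤ D := by
      intro i m' hm'
      have h1 : m'.degree ≤ (g i).totalDegree := degree_le_totalDegree hm'
      have h2 : (g i).totalDegree + (f i).totalDegree ≤ D := by
        rw [hD]
        exact Finset.le_sup (f := fun i => (g i).totalDegree + (f i).totalDegree)
          (Finset.mem_univ i)
      omega
    have hq := key_reduction f (fun i => homogeneousComponent (f i).totalDegree (f i))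
      (fun i => (f i).totalDegree) (fun i => rfl) (fun i => rfl) hreg D g hgD
    rw [hgsum] at hq
    refine ⟨homogeneousComponent p.totalDegree p, hq, ?_, ?_, ?_⟩
    · intro h0
      have hms : m ∈ (homogeneousComponent p.totalDegree p).support :=
        mem_support_comp.mpr ⟨hmd, hmem⟩
      rw [h0] at hms
      simp at hms
    · exact mem_support_comp.mpr ⟨hmd, hmem⟩
    · intro m' hm'
      exact hmax m' (mem_support_comp.mp hm').2
  · rintro ⟨p, hp, hp0, hmem, hmax⟩
    obtain ⟨g, hgsum⟩ := Ideal.mem_span_range_iff_exists_fun.mp hp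
    have hmd : m.degree = p.totalDegree := by
      apply le_antisymm (degree_le_totalDegree hmem)
      obtain ⟨m₀, hm₀, hm₀d⟩ := exists_degree_eq_totalDegree hp0
      by_contra hlt
      push_neg at hlt
      have hlo := hdeg m m₀ (show m.degree < m₀.degree by omega)
      exact ((lo.lt_iff_le_not_ge m m₀).mp hlo).2 (hmax m₀ hm₀)
    set b : Fin s → MvPolynomial (Fin n) K := fun i =>
      if (f i).totalDegree ≤ p.totalDegree
      then homogeneousComponent (p.totalDegree - (f i).totalDegree) (g i) else 0 with hbdef
    have hcompid : homogeneousComponent p.totalDegree p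
        = ∑ i, b i * homogeneousComponent (f i).totalDegree (f i) := by
      have hcg := congrArg (homogeneousComponent p.totalDegree) hgsum
      rw [map_sum] at hcg
      rw [← hcg]
      apply Finset.sum_congr rfl
      intro i _
      rw [comp_mul_hom (homogeneousComponent_isHomogeneous (f i).totalDegree (f i))
        p.totalDegree, hbdef]
    set r := ∑ i, b i * f i with hrdef
    have hrmem : r ∈ Ideal.span (Set.range f) :=
      Ideal.sum_mem _ (fun i _ =>
        Ideal.mul_mem_left _ _ (Ideal.subset_span (Set.mem_range_self i)))
    have hrsplit : r = homogeneousComponent p.totalDegree p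
        + ∑ i, b i * (f i - homogeneousComponent (f i).totalDegree (f i)) := by
      rw [hcompid, ← Finset.sum_add_distrib]
      apply Finset.sum_congr rfl
      intro i _
      ring
    have hE : ∀ m' ∈ (∑ i, b i * (f i - homogeneousComponent (f i).totalDegree
        (f i))).support, m'.degree < p.totalDegree := by
      apply degree_lt_of_mem_support_sum
      intro i _
      rw [hbdef]; dsimp only
      split_ifs with hdi
      · intro m' hm'
        have h := degree_lt_of_mem_support_mul
          (homogeneousComponent_isHomogeneous (p.totalDegree - (f i).totalDegree) (g i))
          (support_sub_top (p := f i)) m' hm'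
        omega
      · rw [zero_mul]
        intro m' hm'
        simp at hm'
    have hcm : coeff m r = coeff m p := by
      rw [hrsplit, coeff_add]
      have h1 : coeff m (homogeneousComponent p.totalDegree p) = coeff m p := by
        rw [coeff_homogeneousComponent, if_pos hmd]
      have h2 : coeff m (∑ i, b i * (f i - homogeneousComponent (f i).totalDegree
          (f i))) = 0 := by
        by_contra h
        have := hE m (mem_support_iff.mpr h)
        omega
      rw [h1, h2, add_zero]
    refine ⟨r, hrmem, ?_, ?_, ?_⟩
    · intro h0
      rw [h0, coeff_zero] at hcm
      exact mem_support_iff.mp hmem hcm.symm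
    · rw [mem_support_iff, hcm]
      exact mem_support_iff.mp hmem
    · intro m' hm'
      rw [mem_support_iff, hrsplit, coeff_add] at hm'
      by_cases h1 : coeff m' (homogeneousComponent p.totalDegree p) = 0
      · have h2 : coeff m' (∑ i, b i * (f i - homogeneousComponent (f i).totalDegree
            (f i))) ≠ 0 := by
          rw [h1, zero_add] at hm'
          exact hm'
        have hlt' := hE m' (mem_support_iff.mpr h2)
        have hlo := hdeg m' m (show m'.degree < m.degree by omega)
        exact ((lo.lt_iff_le_not_ge m' m).mp hlo).1
      · exact hmax m' (mem_support_comp.mp (mem_support_iff.mpr h1)).2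
end

section
/- Let I be a zero-dimensional ideal of K[x_1,...,x_n] and suppose its minimal monomial generators E(I) of the DRL initial ideal satisfy the Borel-type property: for every generator m divisible by x_n, and every k < n, the monomial x_k·m/x_n lies in the initial ideal in_{DRL}(I). Then for every standard monomial ε (i.e., ε ∉ in_{DRL}(I)), the monomial x_n·ε is either a standard monomial or a minimal generator of in_{DRL}(I); i.e., x_n·ε cannot be a non-minimal element of the initial ideal. -/
open Finsupp

/-- Let `S ⊆ (Fin (n+1) →₀ ℕ)` be the set of monomials of the DRL
initial ideal of a zero-dimensional ideal (so `S` is closed under multiplication by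
monomials and every element of `S` is divisible by a minimal generator), and let
`E = {m ∈ S : ∀ k, m_k > 0 → m / x_k ∉ S}` be its set of minimal generators.  Assume
the Borel-type property: for every `m ∈ E` divisible by the last variable `xₙ` and every
`k < n`, the monomial `x_k · m / xₙ` lies in `S`.  Then for every standard monomial
`ε ∉ S`, if `xₙ · ε ∈ S` then `xₙ · ε` is a minimal generator, i.e. `xₙ · ε ∈ E`. -/
theorem borel_frontier_minimal_generator
    (n : ℕ)
    (S : Set (Fin (n + 1) →₀ ℕ))
    -- `S` is upward closed (the monomial set of a monomial ideal)
    (hup : ∀ m ∈ S, ∀ d : Fin (n + 1) →₀ ℕ, m + d ∈ S)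
    -- every monomial of `S` is divisible by a minimal generator
    (hgen : ∀ m ∈ S, ∃ e, (e ∈ S ∧ ∀ k : Fin (n + 1), e k ≠ 0 →
        e - single k 1 ∉ S) ∧ e ≤ m)
    -- Borel-type property of the minimal generators
    (hborel : ∀ m ∈ S, (∀ k : Fin (n + 1), m k ≠ 0 → m - single k 1 ∉ S) →
      m (Fin.last n) ≠ 0 →
      ∀ k : Fin n, m - single (Fin.last n) 1 + single k.castSucc 1 ∈ S) :
    ∀ ε : Fin (n + 1) →₀ ℕ, ε ∉ S → ε + single (Fin.last n) 1 ∈ S →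
      ∀ k : Fin (n + 1), ((ε + single (Fin.last n) 1 : Fin (n + 1) →₀ ℕ)) k ≠ 0 →
        (ε + single (Fin.last n) 1) - single k 1 ∉ S := by
  intro ε hε hμ k hk hS
  rcases eq_or_ne k (Fin.last n) with rfl | hkne
  · apply hε
    have h : ε + single (Fin.last n) 1 - single (Fin.last n) 1 = ε :=
      add_tsub_cancel_right _ _
    rwa [h] at hS
  · obtain ⟨k', rfl⟩ : ∃ k' : Fin n, k = k'.castSucc :=
      ⟨k.castPred hkne, (Fin.castSucc_castPred k hkne).symm⟩
    obtain ⟨e, ⟨heS, hemin⟩, hele⟩ := hgen _ hS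
    have hklast : (k'.castSucc : Fin (n + 1)) ≠ Fin.last n := hkne
    have hεk : ε k'.castSucc ≠ 0 := by
      rw [Finsupp.add_apply, Finsupp.single_apply, if_neg (Ne.symm hklast),
        add_zero] at hk
      exact hk
    have hele' : ∀ i, e i ≤ ε i + (single (Fin.last n) 1 : Fin (n+1) →₀ ℕ) i
        - (single k'.castSucc 1 : Fin (n+1) →₀ ℕ) i := by
      intro i
      have h := Finsupp.le_def.mp hele i
      rwa [Finsupp.tsub_apply, Finsupp.add_apply] at h
    apply hε
    by_cases he : e (Fin.last n) = 0
    · have hle : e ≤ ε := by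
        apply Finsupp.le_def.mpr
        intro i
        have h := hele' i
        rw [Finsupp.single_apply, Finsupp.single_apply] at h
        rcases eq_or_ne i (Fin.last n) with rfl | hi
        · simp [he]
        · rw [if_neg (Ne.symm hi)] at h
          rcases eq_or_ne (k'.castSucc : Fin (n + 1)) i with rfl | hi2
          · rw [if_pos rfl] at h; omega
          · rw [if_neg hi2] at h; omega
      obtain ⟨c, rfl⟩ := le_iff_exists_add.mp hle
      exact hup e heS c
    · have hB := hborel e heS hemin he k'
      have hle : e - single (Fin.last n) 1 + single k'.castSucc 1 ≤ ε := by
        apply Finsupp.le_def.mpr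
        intro i
        have h := hele' i
        rw [Finsupp.add_apply, Finsupp.tsub_apply]
        rw [Finsupp.single_apply, Finsupp.single_apply] at h ⊢
        rcases eq_or_ne i (Fin.last n) with rfl | hi
        · rw [if_pos rfl] at h ⊢
          rw [if_neg hklast] at h ⊢
          omega
        · rw [if_neg (Ne.symm hi)] at h ⊢
          rcases eq_or_ne (k'.castSucc : Fin (n + 1)) i with rfl | hi2
          · rw [if_pos rfl] at h ⊢
            omega
          · rw [if_neg hi2] at h ⊢
            omega
      obtain ⟨c, rfl⟩ := le_iff_exists_add.mp hle
      exact hup _ hB c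
end

section
/- Let f_1,...,f_s ∈ K[x_1,...,x_n] be affine polynomials such that the homogeneous components of highest degree (f_1^h,...,f_s^h) form a regular sequence, and let f ∈ ⟨f_1,...,f_s⟩ be nonzero. Write f = Σ h_i f_i with deg(h_i f_i) ≤ deg(f) for all i (such a representation exists by regularity). Then the polynomial Σ h_i f_i^h, taken over indices i with deg(h_i f_i) = deg(f) and restricted to top-degree components, is a nonzero element of ⟨f_1^h,...,f_s^h⟩ with the same DRL leading term as f. Consequently in_{DRL}(⟨f_1,...,f_s⟩) ⊆ in_{DRL}(⟨f_1^h,...,f_s^h⟩). -/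
open MvPolynomial

namespace Stmt13Aux
variable {K : Type*} [Field K] {n : ℕ} {s : ℕ}

lemma sum_eq_degree (m : Fin n →₀ ℕ) : (m.sum fun _ e => e) = m.degree := rfl

lemma topne (p : MvPolynomial (Fin n) K) (hp : p ≠ 0) :
    homogeneousComponent p.totalDegree p ≠ 0 := by
  obtain ⟨m, hm, hdeg⟩ := p.support.exists_mem_eq_sup (support_nonempty.2 hp)
      (fun m => m.sum fun _ e => e)
  have hd : m.degree = p.totalDegree := by
    rw [totalDegree, hdeg, sum_eq_degree]
  intro h0
  have hc : coeff m (homogeneousComponent p.totalDegree p) = coeff m p := by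
    rw [coeff_homogeneousComponent, if_pos hd]
  rw [h0, coeff_zero] at hc
  exact (mem_support_iff.1 hm) hc.symm

lemma deg_lt_of_top_zero {p : MvPolynomial (Fin n) K} {e : ℕ} (hle : p.totalDegree ≤ e)
    (h0 : homogeneousComponent e p = 0) (hp : p ≠ 0) : p.totalDegree < e := by
  rcases lt_or_eq_of_le hle with h | h
  · exact h
  · exact absurd (h ▸ h0) (topne p hp)

lemma lower_lt (p : MvPolynomial (Fin n) K)
    (h : p - homogeneousComponent p.totalDegree p ≠ 0) :
    (p - homogeneousComponent p.totalDegree p).totalDegree < p.totalDegree := by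
  set r := p - homogeneousComponent p.totalDegree p with hr
  have hsupp : ∀ m ∈ r.support, m.degree < p.totalDegree := by
    intro m hm
    have hcm : coeff m r = coeff m p - (if m.degree = p.totalDegree then coeff m p else 0) := by
      rw [hr, coeff_sub, coeff_homogeneousComponent]
    by_cases hd : m.degree = p.totalDegree
    · rw [if_pos hd, sub_self] at hcm
      exact absurd hcm (mem_support_iff.1 hm)
    · rw [if_neg hd, sub_zero] at hcm
      have : m ∈ p.support := mem_support_iff.2 (hcm ▸ mem_support_iff.1 hm)
      have := le_totalDegree this
      rw [sum_eq_degree] at this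
      omega
  have hrne := support_nonempty.2 h
  obtain ⟨m, hm, hdeg⟩ := r.support.exists_mem_eq_sup hrne (fun m => m.sum fun _ e => e)
  have : r.totalDegree = m.degree := by rw [totalDegree, hdeg, sum_eq_degree]
  rw [this]
  exact hsupp m hm

lemma hc_mul_homog (a F : MvPolynomial (Fin n) K) {d : ℕ} (hF : F.IsHomogeneous d) (e : ℕ) :
    homogeneousComponent e (a * F) =
      if d ≤ e then homogeneousComponent (e - d) a * F else 0 := by
  conv_lhs => rw [← sum_homogeneousComponent a, Finset.sum_mul, map_sum]
  have hterm : ∀ i ∈ Finset.range (a.totalDegree + 1),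
      homogeneousComponent e (homogeneousComponent i a * F) =
        if i = e - d ∧ d ≤ e then homogeneousComponent i a * F else 0 := by
    intro i _
    have hh : (homogeneousComponent i a * F) ∈ homogeneousSubmodule (Fin n) K (i + d) :=
      (mem_homogeneousSubmodule _ _).2 ((homogeneousComponent_isHomogeneous i a).mul hF)
    rw [homogeneousComponent_of_mem hh]
    congr 1
    simp only [eq_iff_iff]
    omega
  rw [Finset.sum_congr rfl hterm]
  by_cases hde : d ≤ e
  · simp only [hde, and_true, if_pos]
    rw [Finset.sum_ite_eq' (Finset.range (a.totalDegree + 1))]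
    by_cases hmem : e - d ∈ Finset.range (a.totalDegree + 1)
    · rw [if_pos hmem]
    · rw [if_neg hmem]
      have : homogeneousComponent (e - d) a = 0 := by
        apply homogeneousComponent_eq_zero
        simp only [Finset.mem_range] at hmem
        omega
      rw [this, zero_mul]
  · simp only [hde, and_false, if_false, Finset.sum_const_zero, if_neg hde]

lemma hc_top_mul (p q : MvPolynomial (Fin n) K) :
    homogeneousComponent (p.totalDegree + q.totalDegree) (p * q) =
      homogeneousComponent p.totalDegree p * homogeneousComponent q.totalDegree q := by
  have hsplit : p * q = p * homogeneousComponent q.totalDegree q +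
      p * (q - homogeneousComponent q.totalDegree q) := by ring
  rw [hsplit, map_add]
  have h1 : homogeneousComponent (p.totalDegree + q.totalDegree)
      (p * homogeneousComponent q.totalDegree q) =
      homogeneousComponent p.totalDegree p * homogeneousComponent q.totalDegree q := by
    rw [hc_mul_homog p _ (homogeneousComponent_isHomogeneous q.totalDegree q),
      if_pos (Nat.le_add_left _ _), Nat.add_sub_cancel]
  have h2 : homogeneousComponent (p.totalDegree + q.totalDegree)
      (p * (q - homogeneousComponent q.totalDegree q)) = 0 := by
    by_cases hr : q - homogeneousComponent q.totalDegree q = 0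
    · rw [hr, mul_zero, map_zero]
    · apply homogeneousComponent_eq_zero
      calc (p * (q - homogeneousComponent q.totalDegree q)).totalDegree
          ≤ p.totalDegree + (q - homogeneousComponent q.totalDegree q).totalDegree :=
            totalDegree_mul _ _
        _ < p.totalDegree + q.totalDegree := by
            have := lower_lt q hr; omega
  rw [h1, h2, add_zero]

lemma tdeg_mul (p q : MvPolynomial (Fin n) K) (hp : p ≠ 0) (hq : q ≠ 0) :
    (p * q).totalDegree = p.totalDegree + q.totalDegree := by
  refine le_antisymm (totalDegree_mul p q) ?_
  by_contra hlt
  push_neg at hlt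
  have h0 : homogeneousComponent (p.totalDegree + q.totalDegree) (p * q) = 0 :=
    homogeneousComponent_eq_zero _ _ hlt
  rw [hc_top_mul] at h0
  exact (mul_ne_zero (topne p hp) (topne q hq)) h0


lemma step (f_ : Fin s → MvPolynomial (Fin n) K) (hne : ∀ i, f_ i ≠ 0)
    (hreg : ∀ i : Fin s, ∀ p : MvPolynomial (Fin n) K,
      p * homogeneousComponent (f_ i).totalDegree (f_ i) ∈
        Ideal.span ((fun j => homogeneousComponent (f_ j).totalDegree (f_ j)) '' {j | j < i}) →
      p ∈ Ideal.span ((fun j => homogeneousComponent (f_ j).totalDegree (f_ j)) '' {j | j < i}))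
    (D : ℕ) (f : MvPolynomial (Fin n) K) (hfD : f.totalDegree < D)
    (k : Fin s) (h : Fin s → MvPolynomial (Fin n) K)
    (hsum : f = ∑ i, h i * f_ i)
    (hle : ∀ i, (h i * f_ i).totalDegree ≤ D)
    (hgt : ∀ i, k < i → (h i * f_ i).totalDegree < D)
    (hk : (h k * f_ k).totalDegree = D) :
    ∃ h' : Fin s → MvPolynomial (Fin n) K, f = ∑ i, h' i * f_ i ∧
      (∀ i, (h' i * f_ i).totalDegree ≤ D) ∧
      ∀ i, k ≤ i → (h' i * f_ i).totalDegree < D := by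
  classical
  set F : Fin s → MvPolynomial (Fin n) K :=
    fun j => homogeneousComponent (f_ j).totalDegree (f_ j) with hF
  have hD0 : 0 < D := lt_of_le_of_lt (Nat.zero_le _) hfD
  have hk0 : h k ≠ 0 := by
    intro h0
    rw [h0, zero_mul, totalDegree_zero] at hk
    omega
  set Dh : ℕ := (h k).totalDegree with hDh
  have hDsplit : Dh + (f_ k).totalDegree = D := by
    rw [← hk, tdeg_mul _ _ hk0 (hne k)]
  set J : Ideal (MvPolynomial (Fin n) K) := Ideal.span (F '' {j | j < k}) with hJ
  have hterm : ∀ i : Fin s, i < k → homogeneousComponent D (h i * f_ i) ∈ J := by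
    intro i hik
    rcases lt_or_eq_of_le (hle i) with hlt | heq
    · rw [homogeneousComponent_eq_zero _ _ hlt]; exact zero_mem _
    · have hi0 : h i ≠ 0 := by
        intro h0; rw [h0, zero_mul, totalDegree_zero] at heq; omega
      have hDi : D = (h i).totalDegree + (f_ i).totalDegree := by
        rw [← heq]; exact tdeg_mul _ _ hi0 (hne i)
      rw [hDi, hc_top_mul]
      exact Ideal.mul_mem_left _ _ (Ideal.subset_span ⟨i, hik, rfl⟩)
  have hsyz : homogeneousComponent Dh (h k) * F k ∈ J := by
    have hcD : ∑ i, homogeneousComponent D (h i * f_ i) = 0 := by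
      rw [← map_sum, ← hsum, homogeneousComponent_eq_zero _ _ hfD]
    have hsplit : homogeneousComponent D (h k * f_ k) =
        -∑ i ∈ Finset.univ.erase k, homogeneousComponent D (h i * f_ i) := by
      have h2 := Finset.add_sum_erase Finset.univ
        (fun i => homogeneousComponent D (h i * f_ i)) (Finset.mem_univ k)
      rw [hcD] at h2
      exact eq_neg_of_add_eq_zero_left h2
    have hmem : homogeneousComponent D (h k * f_ k) ∈ J := by
      rw [hsplit]
      refine neg_mem (Submodule.sum_mem _ ?_)
      intro i hi
      have hik : i ≠ k := (Finset.mem_erase.1 hi).1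
      rcases hik.lt_or_gt with hlt | hlt
      · exact hterm i hlt
      · rw [homogeneousComponent_eq_zero _ _ (hgt i hlt)]; exact zero_mem _
    have hrw : homogeneousComponent D (h k * f_ k) =
        homogeneousComponent Dh (h k) * F k := by
      rw [← hDsplit, hc_top_mul]
    rwa [hrw] at hmem
  have hHk : homogeneousComponent Dh (h k) ∈ J := hreg k _ hsyz
  -- extract coefficients
  have himg : F '' {j | j < k} = Set.range fun j : {j : Fin s // j < k} => F j.1 :=
    Set.image_eq_range _ _
  rw [hJ, himg] at hHk
  obtain ⟨a0, ha0⟩ := (Submodule.mem_span_range_iff_exists_fun _).1 hHk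
  set a : Fin s → MvPolynomial (Fin n) K := fun j =>
    if hj : j < k then
      (if (f_ j).totalDegree ≤ Dh then
        homogeneousComponent (Dh - (f_ j).totalDegree) (a0 ⟨j, hj⟩) else 0)
    else 0 with ha
  have ha_zero : ∀ j, ¬ j < k → a j = 0 := by
    intro j hj; rw [ha]; simp [hj]
  have ha_hom : ∀ j, (a j).IsHomogeneous (Dh - (f_ j).totalDegree) := by
    intro j
    rw [ha]
    by_cases h1 : j < k
    · by_cases h2 : (f_ j).totalDegree ≤ Dh
      · simp only [h1, h2, dif_pos, if_pos]
        exact homogeneousComponent_isHomogeneous _ _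
      · simp only [h1, h2, dif_pos, if_neg, not_false_iff]
        exact isHomogeneous_zero _ _ _
    · simp only [h1, dif_neg, not_false_iff]
      exact isHomogeneous_zero _ _ _
  have ha_deg : ∀ j, a j ≠ 0 → (a j).totalDegree + (f_ j).totalDegree ≤ Dh := by
    intro j hj
    have h1 : j < k := by
      by_contra hc; exact hj (ha_zero j hc)
    have h2 : (f_ j).totalDegree ≤ Dh := by
      by_contra hc
      apply hj
      rw [ha]; simp [h1, hc]
    have := (ha_hom j).totalDegree_le
    omega
  have ha_sum : ∑ j, a j * F j = homogeneousComponent Dh (h k) := by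
    have h1 : homogeneousComponent Dh (h k) =
        homogeneousComponent Dh (homogeneousComponent Dh (h k)) := by
      rw [homogeneousComponent_of_mem (homogeneousComponent_mem _ _), if_pos rfl]
    rw [h1, ← ha0, map_sum]
    have h2 : ∀ j : {j : Fin s // j < k},
        homogeneousComponent Dh (a0 j • F j.1) = a j.1 * F j.1 := by
      intro j
      rw [smul_eq_mul, hc_mul_homog _ _ (homogeneousComponent_isHomogeneous _ _)]
      by_cases h3 : (f_ j.1).totalDegree ≤ Dh
      · rw [if_pos h3, ha]
        simp only [j.2, dif_pos, h3, if_pos]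
        rfl
      · rw [if_neg h3, ha]
        simp only [j.2, dif_pos, h3, if_neg, not_false_iff, zero_mul]
    rw [Finset.sum_congr rfl (fun j _ => h2 j)]
    have h4 : ∀ x : Fin s, x ∈ Finset.univ.filter (· < k) ↔ x < k := by
      intro x; simp
    rw [← Finset.sum_subtype (Finset.univ.filter (· < k)) h4 (fun j => a j * F j)]
    refine (Finset.sum_filter_of_ne ?_).symm
    intro x _ hx
    by_contra hc
    rw [ha_zero x hc, zero_mul] at hx
    exact hx rfl
  have ha_hc : ∀ j, homogeneousComponent Dh (a j * f_ j) = a j * F j := by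
    intro j
    by_cases h0 : a j = 0
    · rw [h0, zero_mul, zero_mul, map_zero]
    · have h2 : (f_ j).totalDegree ≤ Dh := by
        have := ha_deg j h0; omega
      rw [mul_comm (a j) (f_ j), hc_mul_homog _ _ (ha_hom j),
        if_pos (Nat.sub_le _ _)]
      have h3 : Dh - (Dh - (f_ j).totalDegree) = (f_ j).totalDegree := by omega
      rw [h3, mul_comm]
  set T : MvPolynomial (Fin n) K := ∑ j, a j * f_ j with hT
  set h' : Fin s → MvPolynomial (Fin n) K :=
    fun i => h i + a i * f_ k - (if i = k then T else 0) with hh'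
  have hak : a k = 0 := ha_zero k (lt_irrefl k)
  have hh'k : h' k = h k - T := by rw [hh']; simp [hak]
  have hdegT : T.totalDegree ≤ Dh := by
    rw [hT]
    refine le_trans (totalDegree_finset_sum _ _) (Finset.sup_le ?_)
    intro j _
    by_cases h0 : a j = 0
    · simp [h0]
    · exact le_trans (totalDegree_mul _ _) (ha_deg j h0)
  have hk' : (h' k * f_ k).totalDegree < D := by
    have hdeg_h'k : (h' k).totalDegree ≤ Dh := by
      rw [hh'k]
      exact le_trans (totalDegree_sub _ _) (max_le le_rfl hdegT)
    have htop : homogeneousComponent Dh (h' k) = 0 := by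
      rw [hh'k, map_sub, hT, map_sum,
        Finset.sum_congr rfl (fun j _ => ha_hc j), ha_sum, sub_self]
    by_cases h0 : h' k = 0
    · rw [h0, zero_mul, totalDegree_zero]; exact hD0
    · have hlt := deg_lt_of_top_zero hdeg_h'k htop h0
      calc (h' k * f_ k).totalDegree
          ≤ (h' k).totalDegree + (f_ k).totalDegree := totalDegree_mul _ _
        _ < D := by omega
  have hsum' : f = ∑ i, h' i * f_ i := by
    have expand : ∀ i, h' i * f_ i =
        h i * f_ i + (a i * f_ i) * f_ k - (if i = k then T * f_ k else 0) := by
      intro i; rw [hh']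
      by_cases hik : i = k
      · subst hik; simp only [if_pos]; ring
      · simp only [hik, if_neg, not_false_iff]; ring
    rw [Finset.sum_congr rfl (fun i _ => expand i), Finset.sum_sub_distrib,
      Finset.sum_add_distrib, Finset.sum_ite_eq' Finset.univ k
        (fun _ => T * f_ k), if_pos (Finset.mem_univ k), ← Finset.sum_mul, ← hT,
      ← hsum]
    ring
  refine ⟨h', hsum', ?_, ?_⟩
  · intro i
    by_cases hik : i = k
    · subst hik; exact le_of_lt hk'
    · have hrw : h' i = h i + a i * f_ k := by rw [hh']; simp [hik]
      rw [hrw, add_mul]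
      refine le_trans (totalDegree_add _ _) (max_le (hle i) ?_)
      by_cases h0 : a i = 0
      · simp [h0]
      · have h2 := ha_deg i h0
        calc (a i * f_ k * f_ i).totalDegree
            ≤ (a i * f_ k).totalDegree + (f_ i).totalDegree := totalDegree_mul _ _
          _ ≤ (a i).totalDegree + (f_ k).totalDegree + (f_ i).totalDegree :=
              Nat.add_le_add_right (totalDegree_mul _ _) _
          _ ≤ D := by omega
  · intro i hki
    rcases eq_or_lt_of_le hki with heq | hlt
    · exact heq ▸ hk'
    · have hai : a i = 0 := ha_zero i (not_lt.2 (le_of_lt hlt))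
      have hik : i ≠ k := Fin.ne_of_gt hlt
      have hrw : h' i = h i := by rw [hh']; simp [hai, hik]
      rw [hrw]; exact hgt i hlt


lemma reduce (f_ : Fin s → MvPolynomial (Fin n) K) (hne : ∀ i, f_ i ≠ 0)
    (hreg : ∀ i : Fin s, ∀ p : MvPolynomial (Fin n) K,
      p * homogeneousComponent (f_ i).totalDegree (f_ i) ∈
        Ideal.span ((fun j => homogeneousComponent (f_ j).totalDegree (f_ j)) '' {j | j < i}) →
      p ∈ Ideal.span ((fun j => homogeneousComponent (f_ j).totalDegree (f_ j)) '' {j | j < i}))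
    (D : ℕ) (f : MvPolynomial (Fin n) K) (hfD : f.totalDegree < D) :
    ∀ kk : ℕ, ∀ h : Fin s → MvPolynomial (Fin n) K, f = ∑ i, h i * f_ i →
      (∀ i, (h i * f_ i).totalDegree ≤ D) →
      (∀ i : Fin s, kk ≤ i.1 → (h i * f_ i).totalDegree < D) →
      ∃ h' : Fin s → MvPolynomial (Fin n) K,
        f = ∑ i, h' i * f_ i ∧ ∀ i, (h' i * f_ i).totalDegree < D := by
  intro kk
  induction kk with
  | zero => exact fun h h1 h2 h3 => ⟨h, h1, fun i => h3 i (Nat.zero_le _)⟩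
  | succ k ih =>
    intro h h1 h2 h3
    by_cases hks : k < s
    · set kf : Fin s := ⟨k, hks⟩ with hkf
      by_cases hdk : (h kf * f_ kf).totalDegree = D
      · obtain ⟨h', hs', hle', hlt'⟩ := step f_ hne hreg D f hfD kf h h1 h2
          (fun i hi => h3 i (by exact hi)) hdk
        exact ih h' hs' hle' (fun i hi => hlt' i (by exact hi))
      · refine ih h h1 h2 (fun i hi => ?_)
        rcases Nat.eq_or_lt_of_le hi with he | hlt2
        · have hik : i = kf := Fin.ext he.symm
          rw [hik]; exact lt_of_le_of_ne (h2 kf) hdk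
        · exact h3 i hlt2
    · refine ih h h1 h2 (fun i hi => absurd i.2 (by omega))


lemma repBound (f_ : Fin s → MvPolynomial (Fin n) K) (hne : ∀ i, f_ i ≠ 0)
    (hreg : ∀ i : Fin s, ∀ p : MvPolynomial (Fin n) K,
      p * homogeneousComponent (f_ i).totalDegree (f_ i) ∈
        Ideal.span ((fun j => homogeneousComponent (f_ j).totalDegree (f_ j)) '' {j | j < i}) →
      p ∈ Ideal.span ((fun j => homogeneousComponent (f_ j).totalDegree (f_ j)) '' {j | j < i}))
    (f : MvPolynomial (Fin n) K) (hf : f ∈ Ideal.span (Set.range f_)) :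
    ∃ h : Fin s → MvPolynomial (Fin n) K,
      f = ∑ i, h i * f_ i ∧ ∀ i, (h i * f_ i).totalDegree ≤ f.totalDegree := by
  obtain ⟨c, hc⟩ := (Submodule.mem_span_range_iff_exists_fun _).1 hf
  simp_rw [smul_eq_mul] at hc
  suffices H : ∀ D : ℕ, ∀ h : Fin s → MvPolynomial (Fin n) K, f = ∑ i, h i * f_ i →
      (∀ i, (h i * f_ i).totalDegree ≤ D) →
      ∃ h' : Fin s → MvPolynomial (Fin n) K,
        f = ∑ i, h' i * f_ i ∧ ∀ i, (h' i * f_ i).totalDegree ≤ f.totalDegree by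
    exact H (Finset.univ.sup fun i => (c i * f_ i).totalDegree) c hc.symm
      (fun i => Finset.le_sup (f := fun i => (c i * f_ i).totalDegree) (Finset.mem_univ i))
  intro D
  induction D using Nat.strong_induction_on with
  | _ D ih =>
    intro h h1 h2
    by_cases hD : D ≤ f.totalDegree
    · exact ⟨h, h1, fun i => le_trans (h2 i) hD⟩
    · push_neg at hD
      obtain ⟨h', hs', hlt'⟩ := reduce f_ hne hreg D f hD s h h1 h2
        (fun i hi => absurd i.2 (by omega))
      exact ih (D - 1) (by omega) h' hs' (fun i => by have := hlt' i; omega)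


lemma g_eq (f_ : Fin s → MvPolynomial (Fin n) K) (hne : ∀ i, f_ i ≠ 0)
    (f : MvPolynomial (Fin n) K)
    (h : Fin s → MvPolynomial (Fin n) K)
    (hsum : f = ∑ i, h i * f_ i)
    (hdeg : ∀ i, (h i * f_ i).totalDegree ≤ f.totalDegree) :
    (∑ i ∈ Finset.univ.filter
        (fun i : Fin s => (h i * f_ i).totalDegree = f.totalDegree),
      homogeneousComponent (h i).totalDegree (h i) *
        homogeneousComponent (f_ i).totalDegree (f_ i)) =
    homogeneousComponent f.totalDegree f := by
  set Df := f.totalDegree with hDf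
  have h1 : homogeneousComponent Df f = ∑ i, homogeneousComponent Df (h i * f_ i) := by
    conv_lhs => rw [hsum]
    rw [map_sum]
  rw [h1]
  refine (Finset.sum_congr rfl (fun i hi => ?_)).trans (Finset.sum_filter_of_ne ?_)
  · have heq : (h i * f_ i).totalDegree = Df := (Finset.mem_filter.1 hi).2
    by_cases h0 : h i = 0
    · simp [h0]
    · have h2 : Df = (h i).totalDegree + (f_ i).totalDegree := by
        rw [← heq]; exact tdeg_mul _ _ h0 (hne i)
      rw [h2, hc_top_mul]
  · intro i _ hne0
    by_contra hcon
    exact hne0 (homogeneousComponent_eq_zero _ _ (lt_of_le_of_ne (hdeg i) hcon))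


lemma max_mono (lo : LinearOrder (Fin n →₀ ℕ))
    (hdegcomp : ∀ m m' : Fin n →₀ ℕ,
      m.sum (fun _ e => e) < m'.sum (fun _ e => e) → lo.lt m m')
    (f : MvPolynomial (Fin n) K) (hf : f ≠ 0) :
    ∃ m : Fin n →₀ ℕ, m ∈ f.support ∧ (∀ m' ∈ f.support, lo.le m' m) ∧
      (m.sum fun _ e => e) = f.totalDegree := by
  letI := lo
  obtain ⟨m, hm, hmax⟩ := Finset.exists_max_image f.support id (support_nonempty.2 hf)
  refine ⟨m, hm, fun m' hm' => hmax m' hm', ?_⟩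
  obtain ⟨m0, hm0, hd0⟩ := f.support.exists_mem_eq_sup (support_nonempty.2 hf)
    (fun m => m.sum fun _ e => e)
  refine le_antisymm (le_totalDegree hm) ?_
  rw [totalDegree, hd0]
  by_contra hcon
  push_neg at hcon
  exact absurd (hmax m0 hm0) (not_le.2 (hdegcomp m m0 hcon))


end Stmt13Aux

/-- Let `f₁,…,f_s` be affine polynomials whose top homogeneous
components `fᵢʰ` form a regular sequence, and let `0 ≠ f ∈ ⟨f₁,…,f_s⟩` with a
representation `f = Σ hᵢ fᵢ`, `deg (hᵢ fᵢ) ≤ deg f`.  Then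
`g = Σ_{deg(hᵢfᵢ) = deg f} hᵢʰ fᵢʰ` is a nonzero element of `⟨f₁ʰ,…,f_sʰ⟩` having the
same DRL leading monomial as `f`; consequently `in(⟨f₁,…,f_s⟩) ⊆ in(⟨f₁ʰ,…,f_sʰ⟩)`. -/
theorem top_component_leading_term
    (K : Type*) [Field K] (n s : ℕ)
    (lo : LinearOrder (Fin n →₀ ℕ))
    -- DRL: a degree-compatible monomial order
    (hdegcomp : ∀ m m' : Fin n →₀ ℕ,
      m.sum (fun _ e => e) < m'.sum (fun _ e => e) → lo.lt m m')
    (hmulcomp : ∀ m m' d : Fin n →₀ ℕ, lo.le m m' → lo.le (m + d) (m' + d))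
    (f_ : Fin s → MvPolynomial (Fin n) K) (hne : ∀ i, f_ i ≠ 0)
    -- the top homogeneous components form a regular sequence
    (hreg : ∀ i : Fin s, ∀ p : MvPolynomial (Fin n) K,
      p * homogeneousComponent (f_ i).totalDegree (f_ i) ∈
        Ideal.span ((fun j => homogeneousComponent (f_ j).totalDegree (f_ j)) '' {j | j < i}) →
      p ∈ Ideal.span
        ((fun j => homogeneousComponent (f_ j).totalDegree (f_ j)) '' {j | j < i})) :
    (∀ (f : MvPolynomial (Fin n) K), f ≠ 0 →
      ∀ h : Fin s → MvPolynomial (Fin n) K,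
        f = ∑ i : Fin s, h i * f_ i →
        (∀ i, (h i * f_ i).totalDegree ≤ f.totalDegree) →
        (∑ i ∈ Finset.univ.filter
              (fun i : Fin s => (h i * f_ i).totalDegree = f.totalDegree),
            homogeneousComponent (h i).totalDegree (h i) *
              homogeneousComponent (f_ i).totalDegree (f_ i)) ≠ 0 ∧
        (∑ i ∈ Finset.univ.filter
              (fun i : Fin s => (h i * f_ i).totalDegree = f.totalDegree),
            homogeneousComponent (h i).totalDegree (h i) *
              homogeneousComponent (f_ i).totalDegree (f_ i)) ∈
          Ideal.span (Set.range (fun j => homogeneousComponent (f_ j).totalDegree (f_ j))) ∧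
        ∃ m : Fin n →₀ ℕ, m ∈ f.support ∧ (∀ m' ∈ f.support, lo.le m' m) ∧
          m ∈ (∑ i ∈ Finset.univ.filter
                (fun i : Fin s => (h i * f_ i).totalDegree = f.totalDegree),
              homogeneousComponent (h i).totalDegree (h i) *
                homogeneousComponent (f_ i).totalDegree (f_ i)).support ∧
          (∀ m' ∈ (∑ i ∈ Finset.univ.filter
                (fun i : Fin s => (h i * f_ i).totalDegree = f.totalDegree),
              homogeneousComponent (h i).totalDegree (h i) *
                homogeneousComponent (f_ i).totalDegree (f_ i)).support, lo.le m' m)) ∧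
    inMon lo (Ideal.span (Set.range f_)) ⊆
      inMon lo (Ideal.span
        (Set.range (fun j => homogeneousComponent (f_ j).totalDegree (f_ j)))) := by
  classical
  have part1 : ∀ (f : MvPolynomial (Fin n) K), f ≠ 0 →
      ∀ h : Fin s → MvPolynomial (Fin n) K,
        f = ∑ i : Fin s, h i * f_ i →
        (∀ i, (h i * f_ i).totalDegree ≤ f.totalDegree) →
        (∑ i ∈ Finset.univ.filter
              (fun i : Fin s => (h i * f_ i).totalDegree = f.totalDegree),
            homogeneousComponent (h i).totalDegree (h i) *
              homogeneousComponent (f_ i).totalDegree (f_ i)) ≠ 0 ∧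
        (∑ i ∈ Finset.univ.filter
              (fun i : Fin s => (h i * f_ i).totalDegree = f.totalDegree),
            homogeneousComponent (h i).totalDegree (h i) *
              homogeneousComponent (f_ i).totalDegree (f_ i)) ∈
          Ideal.span (Set.range (fun j => homogeneousComponent (f_ j).totalDegree (f_ j))) ∧
        ∃ m : Fin n →₀ ℕ, m ∈ f.support ∧ (∀ m' ∈ f.support, lo.le m' m) ∧
          m ∈ (∑ i ∈ Finset.univ.filter
                (fun i : Fin s => (h i * f_ i).totalDegree = f.totalDegree),
              homogeneousComponent (h i).totalDegree (h i) *
                homogeneousComponent (f_ i).totalDegree (f_ i)).support ∧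
          (∀ m' ∈ (∑ i ∈ Finset.univ.filter
                (fun i : Fin s => (h i * f_ i).totalDegree = f.totalDegree),
              homogeneousComponent (h i).totalDegree (h i) *
                homogeneousComponent (f_ i).totalDegree (f_ i)).support, lo.le m' m) := by
    intro f hf h hsum hdeg
    have hg := Stmt13Aux.g_eq f_ hne f h hsum hdeg
    refine ⟨?_, ?_, ?_⟩
    · rw [hg]; exact Stmt13Aux.topne f hf
    · refine Ideal.sum_mem _ (fun i _ => ?_)
      exact Ideal.mul_mem_left _ _ (Ideal.subset_span ⟨i, rfl⟩)
    · obtain ⟨m, hm, hmax, hdm⟩ := Stmt13Aux.max_mono lo hdegcomp f hf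
      refine ⟨m, hm, hmax, ?_, ?_⟩
      · rw [hg, mem_support_iff, coeff_homogeneousComponent, if_pos]
        · exact mem_support_iff.1 hm
        · rw [← Stmt13Aux.sum_eq_degree]; exact hdm
      · intro m' hm'
        rw [hg, mem_support_iff, coeff_homogeneousComponent] at hm'
        by_cases hdm' : m'.degree = f.totalDegree
        · rw [if_pos hdm'] at hm'
          exact hmax m' (mem_support_iff.2 hm')
        · rw [if_neg hdm'] at hm'; exact absurd rfl hm'
  refine ⟨part1, ?_⟩
  rintro m ⟨p, hpJ, hp0, hm, hmax⟩
  obtain ⟨h, hsum, hdeg⟩ := Stmt13Aux.repBound f_ hne hreg p hpJ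
  obtain ⟨hgne, hgmem, m1, hm1, hmax1, hm1g, hmaxg⟩ := part1 p hp0 h hsum hdeg
  have hmm : m = m1 := lo.le_antisymm _ _ (hmax1 m hm) (hmax m1 hm1)
  refine ⟨_, hgmem, hgne, ?_, ?_⟩
  · rw [hmm]; exact hm1g
  · intro m' hm'
    rw [hmm]; exact hmaxg m' hm'
end
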